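/- Let M be a 3-connected matroid and let e ∈ E(M). Then si(M/e) is not 3-connected if and only if M has a vertical 3-separation (X, {e}, Y). -/

import Mathlib

open Matroid Set

namespace DetPairs

variable {α : Type*}

/-- The rank of a set in a matroid: the maximum size of an independent subset
(as an integer, for convenient arithmetic). -/
noncomputable def r (M : Matroid α) (X : Set α) : ℤ :=
  ((sSup (Set.ncard '' {I | M.Indep I ∧ I ⊆ X}) : ℕ) : ℤ)

/-- The connectivity function `λ_M(X) = r(X) + r(E − X) − r(M)`. -/
noncomputable def lam (M : Matroid α) (X : Set α) : ℤ :=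
  r M X + r M (M.E \ X) - r M M.E

/-- Local connectivity `⊓(X,Y) = r(X) + r(Y) − r(X ∪ Y)`. -/
noncomputable def localConn (M : Matroid α) (X Y : Set α) : ℤ :=
  r M X + r M Y - r M (X ∪ Y)

/-- A circuit: a minimal dependent set. -/
def Circuit (M : Matroid α) (C : Set α) : Prop :=
  C ⊆ M.E ∧ ¬ M.Indep C ∧ ∀ D, D ⊂ C → M.Indep D

/-- A cocircuit: a circuit of the dual. -/
def Cocircuit (M : Matroid α) (C : Set α) : Prop := Circuit M✶ C

/-- A triangle: a 3-element circuit. -/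
def Triangle (M : Matroid α) (T : Set α) : Prop := Circuit M T ∧ T.ncard = 3

/-- A triad: a 3-element cocircuit. -/
def Triad (M : Matroid α) (T : Set α) : Prop := Cocircuit M T ∧ T.ncard = 3

/-- A quad: a 4-element set that is both a circuit and a cocircuit. -/
def Quad (M : Matroid α) (Q : Set α) : Prop :=
  Circuit M Q ∧ Cocircuit M Q ∧ Q.ncard = 4

/-- Deletion of a set of elements. -/
def Del (M : Matroid α) (D : Set α) : Matroid α := M ↾ (M.E \ D)

/-- Contraction of a set of elements. -/
def Con (M : Matroid α) (C : Set α) : Matroid α := (M✶ ↾ (M.E \ C))✶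

/-- `M` is 3-connected: it has no `k`-separation for `k = 1, 2`, where a
`k`-separation is a set `X` with `λ(X) = k − 1`, `|X| ≥ k` and `|E − X| ≥ k`. -/
def ThreeConnected (M : Matroid α) : Prop :=
  ∀ k : ℕ, 0 < k → k < 3 → ∀ X ⊆ M.E,
    ¬ (lam M X = (k : ℤ) - 1 ∧ (k : ℤ) ≤ X.ncard ∧ (k : ℤ) ≤ (M.E \ X).ncard)

/-- A detachable pair: distinct elements `e, f` such that `M \ e \ f` or
`M / e / f` is 3-connected. -/
def DetachablePair (M : Matroid α) (e f : α) : Prop :=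
  e ≠ f ∧ e ∈ M.E ∧ f ∈ M.E ∧
    (ThreeConnected (Del M {e, f}) ∨ ThreeConnected (Con M {e, f}))

/-- The triple of elements with indices `i, i+1, i+2` in an ordering. -/
def tri (e : ℕ → α) (i : ℕ) : Set α := {e i, e (i + 1), e (i + 2)}

/-- `(e 0, …, e (n-1))` is a fan ordering of length `n ≥ 3` in `M`:
consecutive triples alternate between triangles and triads. -/
def FanOrd (M : Matroid α) (n : ℕ) (e : ℕ → α) : Prop :=
  3 ≤ n ∧ Set.InjOn e (Set.Iio n) ∧ (∀ i < n, e i ∈ M.E) ∧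
    (Triangle M (tri e 0) ∨ Triad M (tri e 0)) ∧
    ∀ i, i + 3 < n →
      (Triangle M (tri e i) → Triad M (tri e (i + 1))) ∧
      (Triad M (tri e i) → Triangle M (tri e (i + 1)))

/-- A fan (as a set): either a 2-element subset of the ground set, or the
underlying set of a fan ordering of length at least 3. -/
def IsFan (M : Matroid α) (F : Set α) : Prop :=
  (F ⊆ M.E ∧ F.ncard = 2) ∨ ∃ n e, FanOrd M n e ∧ F = e '' Set.Iio n

/-- A maximal fan: a fan contained in no strictly larger fan. -/
def MaximalFan (M : Matroid α) (F : Set α) : Prop :=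
  IsFan M F ∧ ∀ F', IsFan M F' → F ⊆ F' → F' = F

/-- `M` is a wheel or a whirl: its ground set has a cyclic ordering of even size
`2n` in which consecutive triples alternate between triangles and triads. -/
def IsWheelOrWhirl (M : Matroid α) : Prop :=
  ∃ (n : ℕ) (e : ℕ → α), 2 ≤ n ∧ Set.InjOn e (Set.Iio (2 * n)) ∧
    M.E = e '' Set.Iio (2 * n) ∧
    ∀ i < 2 * n,
      (i % 2 = 0 → Triangle M {e i, e ((i + 1) % (2 * n)), e ((i + 2) % (2 * n))}) ∧
      (i % 2 = 1 → Triad M {e i, e ((i + 1) % (2 * n)), e ((i + 2) % (2 * n))})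

/-- An `M(K₄)`-separator: a 6-element set `{a,b,c,x,y,z}` where `{x,y,z}` is a
triad and `{a,b,c}`, `{a,x,y}`, `{b,x,z}`, `{c,y,z}` are triangles. -/
def MK4Sep (M : Matroid α) (S : Set α) : Prop :=
  ∃ a b c x y z : α, S = {a, b, c, x, y, z} ∧ S.ncard = 6 ∧
    Triad M {x, y, z} ∧ Triangle M {a, b, c} ∧ Triangle M {a, x, y} ∧
    Triangle M {b, x, z} ∧ Triangle M {c, y, z}

/-- A vertical 3-separation `(X, {e}, Y)` of `M`. -/
def VertThreeSep (M : Matroid α) (X : Set α) (e : α) (Y : Set α) : Prop :=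
  X ∪ {e} ∪ Y = M.E ∧ Disjoint X Y ∧ e ∉ X ∧ e ∉ Y ∧
    lam M X = 2 ∧ lam M Y = 2 ∧ e ∈ M.closure X ∧ e ∈ M.closure Y ∧
    3 ≤ r M X ∧ 3 ≤ r M Y

/-- `N` is a simplification of `M`: a restriction of `M` to a set of
representatives, one from each parallel class of nonloops. -/
def SimplificationOf (M N : Matroid α) : Prop :=
  ∃ X : Set α, (∀ x ∈ X, x ∈ M.E ∧ x ∉ M.closure ∅) ∧ N = M ↾ X ∧
    ∀ y ∈ M.E, y ∉ M.closure ∅ →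
      ∃! x, x ∈ X ∧ M.closure {y} = M.closure {x}


section Aux

variable {M : Matroid α} {I J X Y Z S : Set α} {x e : α}


lemma indep_fin [M.Finite] (hI : M.Indep I) : I.Finite :=
  M.ground_finite.subset hI.subset_ground

lemma r_eq_ncard [M.Finite] (hI : M.Indep I) (hIX : I ⊆ X)
    (hmax : ∀ J, M.Indep J → J ⊆ X → J.ncard ≤ I.ncard) : r M X = I.ncard := by
  have hgr : IsGreatest (Set.ncard '' {J | M.Indep J ∧ J ⊆ X}) I.ncard :=
    ⟨⟨I, ⟨hI, hIX⟩, rfl⟩, by rintro n ⟨J, ⟨hJ, hJX⟩, rfl⟩; exact hmax J hJ hJX⟩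
  rw [r, hgr.csSup_eq]

lemma basis'_r [M.Finite] (hI : M.IsBasis' I X) : r M X = I.ncard := by
  refine r_eq_ncard hI.indep hI.subset fun J hJ hJX => ?_
  obtain ⟨J', hJ', hJJ'⟩ := hJ.subset_isBasis'_of_subset hJX
  have hc := hJ'.encard_eq_encard hI
  calc J.ncard ≤ J'.ncard := ncard_le_ncard hJJ' (indep_fin hJ'.indep)
  _ = I.ncard := by rw [ncard_def, hc, ← ncard_def]

lemma r_nonneg (M : Matroid α) (X : Set α) : 0 ≤ r M X := Int.natCast_nonneg _

lemma indep_le_r [M.Finite] (hI : M.Indep I) (hIX : I ⊆ X) : (I.ncard : ℤ) ≤ r M X := by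
  obtain ⟨J, hJ⟩ := M.exists_isBasis' X
  obtain ⟨I', hI', hII'⟩ := hI.subset_isBasis'_of_subset hIX
  have hc : I'.ncard = J.ncard := by rw [ncard_def, hI'.encard_eq_encard hJ, ← ncard_def]
  rw [basis'_r hJ]
  exact_mod_cast (ncard_le_ncard hII' (indep_fin hI'.indep)).trans hc.le

lemma r_le_ncard [M.Finite] (hX : X.Finite) : r M X ≤ X.ncard := by
  obtain ⟨J, hJ⟩ := M.exists_isBasis' X
  rw [basis'_r hJ]
  exact_mod_cast ncard_le_ncard hJ.subset hX

lemma r_mono [M.Finite] (h : X ⊆ Y) : r M X ≤ r M Y := by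
  obtain ⟨J, hJ⟩ := M.exists_isBasis' X
  rw [basis'_r hJ]
  exact indep_le_r hJ.indep (hJ.subset.trans h)

lemma r_empty (M : Matroid α) [M.Finite] : r M ∅ = 0 := by
  have := r_le_ncard (M := M) finite_empty
  have := r_nonneg M (∅ : Set α)
  simp [ncard_empty] at *
  omega

lemma r_union_le [M.Finite] : r M (X ∪ Y) ≤ r M X + r M Y := by
  obtain ⟨J, hJ⟩ := M.exists_isBasis' (X ∪ Y)
  rw [basis'_r hJ]
  have h1 : (↑(J ∩ X).ncard : ℤ) ≤ r M X := indep_le_r (hJ.indep.subset inter_subset_left) inter_subset_right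
  have h2 : (↑(J ∩ Y).ncard : ℤ) ≤ r M Y := indep_le_r (hJ.indep.subset inter_subset_left) inter_subset_right
  have hJu : J = (J ∩ X) ∪ (J ∩ Y) := by
    rw [← inter_union_distrib_left, inter_eq_self_of_subset_left hJ.subset]
  have := ncard_union_le (J ∩ X) (J ∩ Y)
  rw [← hJu] at this
  have : (J.ncard : ℤ) ≤ (J ∩ X).ncard + (J ∩ Y).ncard := by exact_mod_cast this
  linarith

lemma r_singleton_le (M : Matroid α) [M.Finite] (x : α) : r M {x} ≤ 1 := by
  simpa using r_le_ncard (M := M) (finite_singleton x)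

lemma r_le_r_insert [M.Finite] : r M X ≤ r M (insert x X) := r_mono (subset_insert x X)

lemma r_insert_le [M.Finite] : r M (insert x X) ≤ r M X + 1 := by
  have h := r_union_le (M := M) (X := {x}) (Y := X)
  rw [singleton_union] at h
  have := r_singleton_le M x
  linarith

lemma r_closure_eq (M : Matroid α) [M.Finite] (X : Set α) : r M (M.closure X) = r M X := by
  obtain ⟨J, hJ⟩ := M.exists_isBasis' X
  rw [basis'_r hJ, basis'_r hJ.isBasis_closure_right.isBasis']

lemma r_le_of_subset_closure [M.Finite] (h : X ⊆ M.closure Y) : r M X ≤ r M Y :=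
  (r_mono h).trans (r_closure_eq M Y).le

lemma mem_closure_iff_r [M.Finite] (hx : x ∈ M.E) (hX : X ⊆ M.E) :
    x ∈ M.closure X ↔ r M (insert x X) = r M X := by
  constructor
  · intro h
    refine le_antisymm ?_ r_le_r_insert
    have : insert x X ⊆ M.closure X := insert_subset h (M.subset_closure X hX)
    exact r_le_of_subset_closure this
  · intro h
    by_contra hcl
    obtain ⟨J, hJ⟩ := M.exists_isBasis' X
    have hclJ : M.closure J = M.closure X := hJ.closure_eq_closure
    have hxJ : x ∉ J := fun hxJ => hcl (M.subset_closure X hX (hJ.subset hxJ))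
    have hind : M.Indep (insert x J) :=
      insert_indep_iff.mpr ⟨hJ.indep, fun _ => ⟨hx, fun hc => hcl (hclJ ▸ hc)⟩⟩
    have hle : ((insert x J).ncard : ℤ) ≤ r M (insert x X) :=
      indep_le_r hind (insert_subset_insert hJ.subset)
    rw [ncard_insert_of_notMem hxJ (indep_fin hJ.indep)] at hle
    have := basis'_r hJ
    push_cast at hle
    omega

lemma r_submod [M.Finite] (hX : X ⊆ M.E) (hY : Y ⊆ M.E) :
    r M (X ∪ Y) + r M (X ∩ Y) ≤ r M X + r M Y := by
  obtain ⟨I, hI⟩ := M.exists_isBasis (X ∩ Y) (inter_subset_left.trans hX)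
  obtain ⟨J, hJ, hJI⟩ := hI.exists_isBasis_inter_eq_of_superset
    (inter_subset_left.trans subset_union_left) (union_subset hX hY)
  have hrU : r M (X ∪ Y) = J.ncard := basis'_r hJ.isBasis'
  have hrI : r M (X ∩ Y) = I.ncard := basis'_r hI.isBasis'
  have h1 : (↑(J ∩ X).ncard : ℤ) ≤ r M X := indep_le_r (hJ.indep.subset inter_subset_left) inter_subset_right
  have h2 : (↑(J ∩ Y).ncard : ℤ) ≤ r M Y := indep_le_r (hJ.indep.subset inter_subset_left) inter_subset_right
  have hfin : (J ∩ X).Finite := (indep_fin hJ.indep).subset inter_subset_left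
  have hfin' : (J ∩ Y).Finite := (indep_fin hJ.indep).subset inter_subset_left
  have hkey := ncard_inter_add_ncard_union (J ∩ X) (J ∩ Y) hfin hfin'
  have e1 : (J ∩ X) ∩ (J ∩ Y) = I := by
    rw [← hJI]; ext a; simp; tauto
  have e2 : (J ∩ X) ∪ (J ∩ Y) = J := by
    rw [← inter_union_distrib_left, inter_eq_self_of_subset_left hJ.subset]
  rw [e1, e2] at hkey
  have hkey' : (I.ncard : ℤ) + J.ncard = (J ∩ X).ncard + (J ∩ Y).ncard := by exact_mod_cast hkey
  rw [hrU, hrI]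
  linarith


instance dualFin [M.Finite] : M✶.Finite := ⟨M.ground_finite⟩

lemma r_dual [M.Finite] (hZ : Z ⊆ M.E) :
    r M✶ Z = (Z.ncard : ℤ) + r M (M.E \ Z) - r M M.E := by
  have hEfin := M.ground_finite
  obtain ⟨J, hJ⟩ := M.exists_isBasis (M.E \ Z) diff_subset
  obtain ⟨B, hB, hJB⟩ := hJ.indep.subset_isBasis_of_subset hJ.indep.subset_ground
  have hBbase : M.IsBase B := isBasis_ground_iff.mp hB
  have hJeq : J = B ∩ (M.E \ Z) :=
    hJ.eq_of_subset_indep (hBbase.indep.inter_right _) (subset_inter hJB hJ.subset)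
      inter_subset_right
  have hBdiff : B \ Z = B ∩ (M.E \ Z) := by
    ext a
    simp only [mem_diff, mem_inter_iff]
    exact ⟨fun ⟨h1, h2⟩ => ⟨h1, hBbase.subset_ground h1, h2⟩, fun ⟨h1, _, h3⟩ => ⟨h1, h3⟩⟩
  have hrEZ : r M (M.E \ Z) = J.ncard := basis'_r hJ.isBasis'
  have hrE : r M M.E = B.ncard := basis'_r hB.isBasis'
  have hZfin : Z.Finite := hEfin.subset hZ
  have hBfin : B.Finite := hEfin.subset hBbase.subset_ground
  -- the max dual-independent subset of Z is Z \ B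
  have hmain : r M✶ Z = (Z \ B).ncard := by
    refine r_eq_ncard ?_ diff_subset ?_
    · exact dual_indep_iff_exists'.mpr ⟨diff_subset.trans hZ, B, hBbase, disjoint_sdiff_left⟩
    · intro I' hI' hI'Z
      obtain ⟨-, B', hB', hdisj⟩ := dual_indep_iff_exists'.mp hI'
      have hB'fin : B'.Finite := hEfin.subset hB'.subset_ground
      have hI'sub : I' ⊆ Z \ B' := subset_diff.mpr ⟨hI'Z, hdisj⟩
      have h1 : I'.ncard ≤ (Z \ B').ncard := ncard_le_ncard hI'sub (hZfin.diff (t := B'))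
      -- |Z ∩ B'| ≥ |Z ∩ B|
      have hB'diff : B' \ Z = B' ∩ (M.E \ Z) := by
        ext a
        simp only [mem_diff, mem_inter_iff]
        exact ⟨fun ⟨h1, h2⟩ => ⟨h1, hB'.subset_ground h1, h2⟩, fun ⟨h1, _, h3⟩ => ⟨h1, h3⟩⟩
      have hJle : (↑(B' ∩ (M.E \ Z)).ncard : ℤ) ≤ r M (M.E \ Z) :=
        indep_le_r (hB'.indep.subset inter_subset_left) inter_subset_right
      have hBB' : B'.ncard = B.ncard := by rw [ncard_def, hB'.encard_eq_encard_of_isBase hBbase, ← ncard_def]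
      have i1 := ncard_inter_add_ncard_diff_eq_ncard Z B hZfin
      have i2 := ncard_inter_add_ncard_diff_eq_ncard Z B' hZfin
      have i3 := ncard_inter_add_ncard_diff_eq_ncard B Z hBfin
      have i4 := ncard_inter_add_ncard_diff_eq_ncard B' Z hB'fin
      rw [hBdiff, ← hJeq] at i3
      rw [hB'diff] at i4
      have hJle' : (B' ∩ (M.E \ Z)).ncard ≤ J.ncard := by
        rw [hrEZ] at hJle; exact_mod_cast hJle
      have hZB : Z ∩ B = B ∩ Z := inter_comm _ _
      have hZB' : Z ∩ B' = B' ∩ Z := inter_comm _ _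
      rw [hZB] at i1; rw [hZB'] at i2
      omega
  rw [hmain, hrEZ, hrE]
  have i1 := ncard_inter_add_ncard_diff_eq_ncard Z B hZfin
  have i3 := ncard_inter_add_ncard_diff_eq_ncard B Z hBfin
  rw [hBdiff, ← hJeq] at i3
  have hZB : Z ∩ B = B ∩ Z := inter_comm _ _
  rw [hZB] at i1
  have : (Z \ B).ncard + (B ∩ Z).ncard = Z.ncard := by omega
  have h3 : (B ∩ Z).ncard + J.ncard = B.ncard := i3
  omega

lemma r_restrict (M : Matroid α) (R Z : Set α) : r (M ↾ R) Z = r M (Z ∩ R) := by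
  have : {I | (M ↾ R).Indep I ∧ I ⊆ Z} = {I | M.Indep I ∧ I ⊆ Z ∩ R} := by
    ext I
    simp only [mem_setOf_eq, restrict_indep_iff, subset_inter_iff]
    tauto
  rw [r, this, r]

lemma con_ground' (M : Matroid α) (C : Set α) : (Con M C).E = M.E \ C := rfl

instance conFin {C : Set α} [M.Finite] : (Con M C).Finite :=
  ⟨M.ground_finite.subset (by rw [con_ground']; exact diff_subset)⟩

lemma r_con [M.Finite] (he : e ∈ M.E) (hZ : Z ⊆ M.E \ {e}) :
    r (Con M {e}) Z = r M (Z ∪ {e}) - r M {e} := by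
  haveI hres : (M✶ ↾ (M.E \ {e})).Finite := ⟨M.ground_finite.subset diff_subset⟩
  have hE' : (M✶ ↾ (M.E \ {e})).E = M.E \ {e} := rfl
  have hcon : r (Con M {e}) Z = r ((M✶ ↾ (M.E \ {e}))✶) Z := rfl
  rw [hcon, r_dual (by rw [hE']; exact hZ)]
  rw [hE', r_restrict, r_restrict]
  have e0 : (M.E \ {e}) ∩ (M.E \ {e}) = M.E \ {e} := inter_self _
  have e1 : ((M.E \ {e}) \ Z) ∩ (M.E \ {e}) = (M.E \ {e}) \ Z :=
    inter_eq_self_of_subset_left diff_subset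
  rw [e0, e1, r_dual (diff_subset.trans diff_subset), r_dual diff_subset]
  have e2 : M.E \ ((M.E \ {e}) \ Z) = Z ∪ {e} := by
    rw [diff_diff_right, diff_diff_cancel_left (singleton_subset_iff.mpr he)]
    rw [inter_eq_self_of_subset_right (hZ.trans diff_subset), union_comm]
  have e3 : M.E \ (M.E \ {e}) = {e} := diff_diff_cancel_left (singleton_subset_iff.mpr he)
  rw [e2, e3]
  have hfin : (M.E \ {e}).Finite := M.ground_finite.subset diff_subset
  have i1 := ncard_diff_add_ncard_of_subset hZ hfin
  have : ((M.E \ {e}) \ Z).ncard + Z.ncard = (M.E \ {e}).ncard := i1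
  omega


lemma lam_nonneg [M.Finite] (hX : X ⊆ M.E) : 0 ≤ lam M X := by
  have h := r_union_le (M := M) (X := X) (Y := M.E \ X)
  rw [union_diff_cancel hX] at h
  unfold lam; linarith

lemma r_singleton_eq_one [M.Finite] (hx : x ∈ M.E) (hl : x ∉ M.closure ∅) : r M {x} = 1 := by
  have h1 := r_singleton_le M x
  have h0 := r_nonneg M {x}
  have : r M {x} ≠ 0 := by
    intro h
    apply hl
    rw [mem_closure_iff_r hx (empty_subset _)]
    simpa [r_empty] using h
  omega

/-- e is not a loop in a 3-connected matroid with another element. -/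
lemma r_singleton_threeConn [M.Finite] (hM : ThreeConnected M) (he : e ∈ M.E)
    (hne : (M.E \ {e}).Nonempty) : r M {e} = 1 := by
  refine r_singleton_eq_one he fun hl => ?_
  have hEe : M.E \ {e} ⊆ M.E := diff_subset
  have h1 : e ∈ M.closure (M.E \ {e}) :=
    closure_subset_closure M (empty_subset _) hl
  have h2 : r M (insert e (M.E \ {e})) = r M (M.E \ {e}) :=
    (mem_closure_iff_r he hEe).mp h1
  rw [insert_diff_singleton, insert_eq_of_mem he] at h2
  have h3 : r M {e} = 0 := by
    have h1' := r_singleton_le M e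
    have h0 := r_nonneg M {e}
    by_contra h
    have : r M {e} = 1 := by omega
    -- e is a loop: {e} ⊆ closure ∅ so r {e} ≤ r ∅ = 0
    have := r_le_of_subset_closure (M := M) (X := {e}) (Y := (∅ : Set α))
      (singleton_subset_iff.mpr hl)
    rw [r_empty] at this
    omega
  have hlam : lam M {e} = 0 := by
    unfold lam
    rw [h3, h2]
    ring
  refine hM 1 one_pos (by norm_num) {e} (singleton_subset_iff.mpr he) ⟨by rw [hlam]; norm_num, ?_, ?_⟩
  · simp
  · have : 0 < (M.E \ {e}).ncard := by
      rw [ncard_pos (M.ground_finite.subset diff_subset)]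
      exact hne
    exact_mod_cast this

lemma simp_spans (M₀ : Matroid α) {S : Set α}
    (hS1 : ∀ x ∈ S, x ∈ M₀.E ∧ x ∉ M₀.closure ∅)
    (hS2 : ∀ y ∈ M₀.E, y ∉ M₀.closure ∅ →
      ∃! x, x ∈ S ∧ M₀.closure {y} = M₀.closure {x}) :
    ∀ W, W ⊆ M₀.E → W ⊆ M₀.closure (S ∩ M₀.closure W) := by
  intro W hWE z hz
  by_cases hzl : z ∈ M₀.closure ∅
  · exact closure_subset_closure M₀ (empty_subset _) hzl
  · obtain ⟨x, ⟨hxS, hcl⟩, -⟩ := hS2 z (hWE hz) hzl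
    have hxE : x ∈ M₀.E := (hS1 x hxS).1
    have hxcl : x ∈ M₀.closure W := by
      have : x ∈ M₀.closure {z} := hcl ▸ M₀.mem_closure_self x hxE
      exact closure_subset_closure M₀ (singleton_subset_iff.mpr hz) this
    have : z ∈ M₀.closure {x} := hcl ▸ M₀.mem_closure_self z (hWE hz)
    exact closure_subset_closure M₀ (singleton_subset_iff.mpr (mem_inter hxS hxcl)) this

lemma simp_ground_spans (M₀ : Matroid α) {S : Set α}
    (hS1 : ∀ x ∈ S, x ∈ M₀.E ∧ x ∉ M₀.closure ∅)
    (hS2 : ∀ y ∈ M₀.E, y ∉ M₀.closure ∅ →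
      ∃! x, x ∈ S ∧ M₀.closure {y} = M₀.closure {x}) :
    M₀.E ⊆ M₀.closure S := by
  have h := simp_spans M₀ hS1 hS2 M₀.E Subset.rfl
  rwa [closure_ground, inter_eq_self_of_subset_left (fun x hx => (hS1 x hx).1)] at h

lemma simp_pair (M₀ : Matroid α) [M₀.Finite] {S : Set α} {x₁ x₂ : α}
    (hS1 : ∀ x ∈ S, x ∈ M₀.E ∧ x ∉ M₀.closure ∅)
    (hS2 : ∀ y ∈ M₀.E, y ∉ M₀.closure ∅ →
      ∃! x, x ∈ S ∧ M₀.closure {y} = M₀.closure {x})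
    (h₁ : x₁ ∈ S) (h₂ : x₂ ∈ S) (hne : x₁ ≠ x₂) :
    2 ≤ r M₀ {x₁, x₂} := by
  obtain ⟨hE₁, hl₁⟩ := hS1 x₁ h₁
  obtain ⟨hE₂, hl₂⟩ := hS1 x₂ h₂
  have hr₁ : r M₀ {x₁} = 1 := r_singleton_eq_one hE₁ hl₁
  have hr₂ : r M₀ {x₂} = 1 := r_singleton_eq_one hE₂ hl₂
  by_contra hlt
  push_neg at hlt
  have hmono : r M₀ {x₁} ≤ r M₀ {x₁, x₂} := r_mono (by simp)
  have hrp : r M₀ {x₁, x₂} = 1 := by omega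
  have hm₂ : x₂ ∈ M₀.closure {x₁} := by
    rw [mem_closure_iff_r hE₂ (singleton_subset_iff.mpr hE₁)]
    have : ({x₂, x₁} : Set α) = {x₁, x₂} := pair_comm x₂ x₁
    rw [show (insert x₂ {x₁} : Set α) = {x₂, x₁} from rfl, this, hrp, hr₁]
  have hm₁ : x₁ ∈ M₀.closure {x₂} := by
    rw [mem_closure_iff_r hE₁ (singleton_subset_iff.mpr hE₂)]
    rw [show (insert x₁ {x₂} : Set α) = {x₁, x₂} from rfl, hrp, hr₂]
  have hcl : M₀.closure {x₁} = M₀.closure {x₂} := by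
    apply subset_antisymm
    · exact closure_subset_closure_of_subset_closure (singleton_subset_iff.mpr hm₁)
    · exact closure_subset_closure_of_subset_closure (singleton_subset_iff.mpr hm₂)
  exact hne ((hS2 x₁ hE₁ hl₁).unique ⟨h₁, rfl⟩ ⟨h₂, hcl⟩)

lemma exists_simplification (M₀ : Matroid α) : ∃ N, SimplificationOf M₀ N := by
  classical
  by_cases hne : ∃ x, x ∈ M₀.E ∧ x ∉ M₀.closure ∅
  · haveI : Nonempty α := ⟨hne.choose⟩
    set NL := {x | x ∈ M₀.E ∧ x ∉ M₀.closure ∅} with hNL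
    set pk : Set α → α := fun C =>
      if h : ∃ x, x ∈ NL ∧ M₀.closure {x} = C then h.choose else Classical.arbitrary α with hpk
    set S := pk '' ((fun x => M₀.closure {x}) '' NL) with hs
    have hpk_spec : ∀ C, (h : ∃ x, x ∈ NL ∧ M₀.closure {x} = C) →
        pk C ∈ NL ∧ M₀.closure {pk C} = C := by
      intro C h
      rw [hpk]
      simp only [dif_pos h]
      exact h.choose_spec
    refine ⟨M₀ ↾ S, S, ?_, rfl, ?_⟩
    · rintro x ⟨C, ⟨y, hy, rfl⟩, rfl⟩
      exact (hpk_spec _ ⟨y, hy, rfl⟩).1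
    · intro y hyE hyl
      have hyNL : y ∈ NL := ⟨hyE, hyl⟩
      have hex : ∃ x, x ∈ NL ∧ M₀.closure {x} = M₀.closure {y} := ⟨y, hyNL, rfl⟩
      obtain ⟨hNLp, hclp⟩ := hpk_spec _ hex
      refine ⟨pk (M₀.closure {y}), ⟨⟨M₀.closure {y}, ⟨y, hyNL, rfl⟩, rfl⟩, hclp.symm⟩, ?_⟩
      rintro z ⟨⟨C, ⟨y', hy', rfl⟩, rfl⟩, hclz⟩
      have hz := hpk_spec _ ⟨y', hy', rfl⟩
      have heq : M₀.closure {y'} = M₀.closure {y} := by rw [← hz.2, ← hclz]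
      show pk (M₀.closure {y'}) = pk (M₀.closure {y})
      rw [heq]
  · refine ⟨M₀ ↾ (∅ : Set α), ∅, by simp, rfl, fun y hy hyl => absurd ⟨y, hy, hyl⟩ hne⟩


lemma vertsep_not_threeConn [M.Finite] (hM : ThreeConnected M) (he : e ∈ M.E)
    (hsep : VertThreeSep M X e Y) {N : Matroid α}
    (hN : SimplificationOf (Con M {e}) N) : ¬ ThreeConnected N := by
  obtain ⟨hpart, hdisj, heX, heY, hlamX, hlamY, hclX, hclY, hrX, hrY⟩ := hsep
  set M' := Con M {e} with hM'def
  have hEfin := M.ground_finite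
  have hXE : X ⊆ M.E := fun a ha => by rw [← hpart]; exact Or.inl (Or.inl ha)
  have hYE : Y ⊆ M.E := fun a ha => by rw [← hpart]; exact Or.inr ha
  have hmem : ∀ a, a ∈ M.E ↔ a ∈ X ∨ a = e ∨ a ∈ Y := by
    intro a; rw [← hpart]; simp only [mem_union, mem_singleton_iff]; tauto
  have hXE' : X ⊆ M.E \ {e} :=
    fun a ha => ⟨hXE ha, fun h => heX ((mem_singleton_iff.mp h) ▸ ha)⟩
  have hEX : M.E \ X = Y ∪ {e} := by
    ext a
    have h1 := hmem a
    have h2 : a ∈ X → a ∈ Y → False := fun hx hy => disjoint_left.mp hdisj hx hy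
    have h3 : a = e → a ∉ X := fun hh hx => heX (hh ▸ hx)
    have h4 : a = e → a ∈ M.E := fun hh => hh ▸ he
    have h5 : a ∈ Y → a ∈ M.E := fun hh => hYE hh
    simp only [mem_diff, mem_union, mem_singleton_iff]
    tauto
  have hXne : X.Nonempty := by
    rcases X.eq_empty_or_nonempty with h | h
    · rw [h, r_empty] at hrX; omega
    · exact h
  have hE'ne : (M.E \ {e}).Nonempty := hXne.mono hXE'
  have hre : r M {e} = 1 := r_singleton_threeConn hM he hE'ne
  have hrXe : r M (X ∪ {e}) = r M X := by
    rw [union_singleton]; exact (mem_closure_iff_r he hXE).mp hclX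
  have hrYe : r M (Y ∪ {e}) = r M Y := by
    rw [union_singleton]; exact (mem_closure_iff_r he hYE).mp hclY
  have hrEX : r M (M.E \ X) = r M Y := by rw [hEX]; exact hrYe
  have hrE : r M M.E = r M X + r M Y - 2 := by
    have h := hlamX; unfold lam at h; rw [hrEX] at h; linarith
  have hYE' : Y ⊆ M.E \ {e} :=
    fun a ha => ⟨hYE ha, fun h => heY ((mem_singleton_iff.mp h) ▸ ha)⟩
  have hgr : M'.E = M.E \ {e} := rfl
  have hrX' : r M' X = r M X - 1 := by rw [hM'def, r_con he hXE', hrXe, hre]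
  have hrY' : r M' Y = r M Y - 1 := by rw [hM'def, r_con he hYE', hrYe, hre]
  have hrE' : r M' (M.E \ {e}) = r M M.E - 1 := by
    rw [hM'def, r_con he Subset.rfl, diff_union_of_subset (singleton_subset_iff.mpr he), hre]
  obtain ⟨S, hS1, rfl, hS2⟩ := hN
  have hSE : S ⊆ M.E \ {e} := fun x hx => (hS1 x hx).1
  have hSfin : S.Finite := (hEfin.subset diff_subset).subset hSE
  haveI hNfin : (M' ↾ S).Finite := ⟨hSfin⟩
  set A := S ∩ M'.closure X with hA
  set B := S \ A with hB
  have hAS : A ⊆ S := inter_subset_left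
  have hXgr : X ⊆ M'.E := hXE'
  have hrA : r M' A = r M' X := by
    apply le_antisymm
    · exact r_le_of_subset_closure inter_subset_right
    · exact r_le_of_subset_closure (simp_spans M' hS1 hS2 X hXgr)
  have hBY : B ⊆ Y := by
    rintro b ⟨hbS, hbA⟩
    have hbE : b ∈ M.E \ {e} := hSE hbS
    rcases (hmem b).mp hbE.1 with h | h | h
    · exact absurd ⟨hbS, M'.subset_closure X hXgr h⟩ hbA
    · exact absurd (mem_singleton_iff.mpr h) hbE.2
    · exact h
  have hrB_le : r M' B ≤ r M' Y := r_mono hBY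
  have hrS : r M' S = r M' (M.E \ {e}) := by
    apply le_antisymm (r_mono hSE)
    exact r_le_of_subset_closure (simp_ground_spans M' hS1 hS2)
  have hsubadd : r M' S ≤ r M' A + r M' B := by
    have hu : A ∪ B = S := union_diff_cancel hAS
    calc r M' S = r M' (A ∪ B) := by rw [hu]
    _ ≤ _ := r_union_le
  have hAfin : A.Finite := hSfin.subset hAS
  have hBfin : B.Finite := hSfin.subset diff_subset
  have hrAval : r M' A = r M X - 1 := by rw [hrA, hrX']
  have hrBub : r M' B ≤ r M Y - 1 := hrB_le.trans_eq hrY'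
  have hrSval : r M' S = r M M.E - 1 := by rw [hrS, hrE']
  have hBlb : r M Y - 2 ≤ r M' B := by
    have := hsubadd; rw [hrSval, hrAval, hrE] at this; linarith
  have hBne : B.Nonempty := by
    rcases B.eq_empty_or_nonempty with h | h
    · rw [h, r_empty] at hBlb; omega
    · exact h
  have hAne : A.Nonempty := by
    rcases A.eq_empty_or_nonempty with h | h
    · rw [h, r_empty] at hrAval; omega
    · exact h
  have hNE : (M' ↾ S).E = S := rfl
  have hrNA : r (M' ↾ S) A = r M' A := by
    rw [r_restrict, inter_eq_self_of_subset_left hAS]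
  have hrNB : r (M' ↾ S) B = r M' B := by
    rw [r_restrict, inter_eq_self_of_subset_left diff_subset]
  have hrNS : r (M' ↾ S) S = r M' S := by rw [r_restrict, inter_self]
  have hNEA : (M' ↾ S).E \ A = B := rfl
  have hlamA : lam (M' ↾ S) A = r M' A + r M' B - r M' S := by
    unfold lam
    rw [hNEA, hNE, hrNA, hrNB, hrNS]
  have hlam_ub : lam (M' ↾ S) A ≤ 1 := by
    rw [hlamA, hrAval, hrSval, hrE]; linarith
  have hlam_lb : 0 ≤ lam (M' ↾ S) A := lam_nonneg hAS
  intro h3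
  have hcard1A : (1:ℤ) ≤ (A.ncard : ℤ) := by
    have := (ncard_pos hAfin).mpr hAne; omega
  have hcard1B : (1:ℤ) ≤ (B.ncard : ℤ) := by
    have := (ncard_pos hBfin).mpr hBne; omega
  rcases (show lam (M' ↾ S) A = 0 ∨ lam (M' ↾ S) A = 1 by omega) with h0 | h1
  · exact h3 1 one_pos (by norm_num) A hAS
      ⟨by rw [h0]; norm_num, by exact_mod_cast hcard1A, by rw [hNEA]; exact_mod_cast hcard1B⟩
  · by_cases hB2 : 2 ≤ (B.ncard : ℤ)
    · refine h3 2 two_pos (by norm_num) A hAS ⟨by rw [h1]; norm_num, ?_, ?_⟩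
      · have := r_le_ncard (M := M') hAfin; push_cast; linarith [hrAval, hrX]
      · rw [hNEA]; exact_mod_cast hB2
    · exfalso
      have hBone : B.ncard = 1 := by omega
      obtain ⟨b, hbB⟩ := ncard_eq_one.mp hBone
      have hbmem : b ∈ B := hbB ▸ rfl
      have hbS : b ∈ S := diff_subset hbmem
      have hbnA : b ∉ A := hbmem.2
      have hbE' : b ∈ M'.E := hSE hbS
      have hAE' : A ⊆ M'.E := hAS.trans hSE
      have hclAX : M'.closure A ⊆ M'.closure X := by
        have h1 : M'.closure A ⊆ M'.closure (M'.closure X) :=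
          closure_subset_closure M' inter_subset_right
        rwa [closure_closure] at h1
      have hbncl : b ∉ M'.closure A := fun hc => hbnA ⟨hbS, hclAX hc⟩
      have hins : r M' (insert b A) ≠ r M' A :=
        fun hEq => hbncl ((mem_closure_iff_r hbE' hAE').mpr hEq)
      have hinsS : insert b A = S := by
        have hu : A ∪ B = S := union_diff_cancel hAS
        rw [hbB, union_singleton] at hu
        exact hu
      have hSA : r M' A ≤ r M' S := r_mono (hAS.trans Subset.rfl)
      have hrbB : r M' B ≤ 1 := by rw [hbB]; exact r_singleton_le M' b
      rw [hlamA] at h1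
      have hSeq : r M' S = r M' A := by linarith
      exact hins (by rw [hinsS, hSeq])


lemma not_threeConn_vertsep [M.Finite] (hM : ThreeConnected M) (he : e ∈ M.E)
    {N : Matroid α} (hN : SimplificationOf (Con M {e}) N) (h3 : ¬ ThreeConnected N) :
    ∃ X Y, VertThreeSep M X e Y := by
  set M' := Con M {e} with hM'def
  have hEfin := M.ground_finite
  have hE'fin : (M.E \ {e}).Finite := hEfin.subset diff_subset
  obtain ⟨S, hS1, rfl, hS2⟩ := hN
  have hgr : M'.E = M.E \ {e} := rfl
  have hSE : S ⊆ M.E \ {e} := fun x hx => (hS1 x hx).1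
  have hSfin : S.Finite := hE'fin.subset hSE
  haveI hNfin : (M' ↾ S).Finite := ⟨hSfin⟩
  -- extract the violating separation of N
  unfold ThreeConnected at h3
  push_neg at h3
  obtain ⟨k, hk0, hk3, A, hAS', hlamA, hkA, hkB'⟩ := h3
  have hNE : (M' ↾ S).E = S := rfl
  have hAS : A ⊆ S := hAS'
  set B := S \ A with hBdef
  have hkB : (k:ℤ) ≤ (B.ncard : ℤ) := hkB'
  have hk12 : k = 1 ∨ k = 2 := by omega
  have hAfin : A.Finite := hSfin.subset hAS
  have hBfin : B.Finite := hSfin.subset diff_subset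
  have hk1 : (1:ℤ) ≤ (k:ℤ) := by exact_mod_cast hk0
  have hAne : A.Nonempty := by
    rw [← ncard_pos hAfin]; omega
  have hBne : B.Nonempty := by
    rw [← ncard_pos hBfin]; omega
  have hE'ne : (M.E \ {e}).Nonempty := hAne.mono (hAS.trans hSE)
  have hre : r M {e} = 1 := r_singleton_threeConn hM he hE'ne
  -- ranks of A and B are at least k
  have hsingle : ∀ x ∈ S, r M' {x} = 1 := fun x hx =>
    r_singleton_eq_one (hS1 x hx).1 (hS1 x hx).2
  have hrW_ge : ∀ W, W ⊆ S → W.Nonempty → 1 ≤ r M' W := by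
    intro W hWS ⟨w, hw⟩
    have := r_mono (M := M') (singleton_subset_iff.mpr hw)
    rw [hsingle w (hWS hw)] at this
    exact this
  have hrW_ge2 : ∀ W, W ⊆ S → 2 ≤ (W.ncard:ℤ) → 2 ≤ r M' W := by
    intro W hWS hW2
    have h2 : 1 < W.ncard := by omega
    rw [one_lt_ncard_iff (hSfin.subset hWS)] at h2
    obtain ⟨a, b, ha, hb, hab⟩ := h2
    have hpair := simp_pair M' hS1 hS2 (hWS ha) (hWS hb) hab
    have hsub : ({a, b} : Set α) ⊆ W := by
      intro z hz; rcases hz with h | h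
      · exact h ▸ ha
      · exact (mem_singleton_iff.mp h) ▸ hb
    exact hpair.trans (r_mono hsub)
  have hrAk : (k:ℤ) ≤ r M' A := by
    rcases hk12 with h | h
    · rw [h]; exact_mod_cast hrW_ge A hAS hAne
    · rw [h] at hkA ⊢; exact hrW_ge2 A hAS (by exact_mod_cast hkA)
  have hrBk : (k:ℤ) ≤ r M' B := by
    rcases hk12 with h | h
    · rw [h]; exact_mod_cast hrW_ge B diff_subset hBne
    · rw [h] at hkB ⊢; exact hrW_ge2 B diff_subset hkB
  -- translate lam N A
  have hrNA : r (M' ↾ S) A = r M' A := by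
    rw [r_restrict, inter_eq_self_of_subset_left hAS]
  have hrNB : r (M' ↾ S) B = r M' B := by
    rw [r_restrict, inter_eq_self_of_subset_left diff_subset]
  have hrNS : r (M' ↾ S) S = r M' S := by rw [r_restrict, inter_self]
  have hrS : r M' S = r M' M'.E := by
    apply le_antisymm (r_mono (by rw [hgr]; exact hSE))
    exact r_le_of_subset_closure (simp_ground_spans M' hS1 hS2)
  have heq : r M' A + r M' B - r M' S = (k:ℤ) - 1 := by
    have h := hlamA
    unfold lam at h
    rw [show (M' ↾ S).E \ A = B from rfl, hNE, hrNA, hrNB, hrNS] at h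
    exact h
  -- the separation of M'
  set X' := M'.closure A with hX'def
  have hX'E : X' ⊆ M'.E := closure_subset_ground M' A
  set Y' := M'.E \ X' with hY'def
  have hY'E : Y' ⊆ M'.E := diff_subset
  have hAX' : A ⊆ X' := M'.subset_closure A (hAS.trans hSE)
  have hrX'A : r M' X' = r M' A := r_closure_eq M' A
  have hY'clB : Y' ⊆ M'.closure B := by
    rintro z ⟨hzE, hznX⟩
    have hznl : z ∉ M'.closure ∅ := fun hc =>
      hznX (closure_subset_closure M' (empty_subset A) hc)
    obtain ⟨x, ⟨hxS, hxcl⟩, -⟩ := hS2 z hzE hznl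
    have hzx : z ∈ M'.closure {x} := hxcl ▸ M'.mem_closure_self z hzE
    have hxB : x ∈ B := by
      refine ⟨hxS, fun hxA => hznX ?_⟩
      exact closure_subset_closure M' (singleton_subset_iff.mpr hxA) hzx
    exact closure_subset_closure M' (singleton_subset_iff.mpr hxB) hzx
  have hrY'B : r M' Y' ≤ r M' B := r_le_of_subset_closure hY'clB
  have hunion : X' ∪ Y' = M'.E := union_diff_cancel hX'E
  have hrE'sub : r M' M'.E ≤ r M' X' + r M' Y' := by
    calc r M' M'.E = r M' (X' ∪ Y') := by rw [hunion]
    _ ≤ _ := r_union_le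
  have hY'ne : Y'.Nonempty := by
    rcases Y'.eq_empty_or_nonempty with h | h
    · exfalso
      have hEX : M'.E ⊆ X' := by
        rw [hY'def] at h; exact diff_eq_empty.mp h
      have h1 : r M' M'.E ≤ r M' A := by
        rw [← hrX'A]; exact r_mono hEX
      rw [hrS] at heq
      linarith
    · exact h
  -- lam of X' in M'
  have hlam' : lam M' X' = r M' X' + r M' Y' - r M' M'.E := rfl
  have hlam'_lb : 0 ≤ lam M' X' := lam_nonneg hX'E
  have hlam'_ub : lam M' X' ≤ (k:ℤ) - 1 := by
    rw [hlam', hrX'A]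
    rw [hrS] at heq
    linarith
  -- rank transfer between M and M'
  have hX'E'' : X' ⊆ M.E \ {e} := hX'E
  have hY'E'' : Y' ⊆ M.E \ {e} := hY'E
  have hX'subE : X' ⊆ M.E := hX'E''.trans diff_subset
  have hY'subE : Y' ⊆ M.E := hY'E''.trans diff_subset
  have henX' : e ∉ X' := fun h => (hX'E'' h).2 rfl
  have henY' : e ∉ Y' := fun h => (hY'E'' h).2 rfl
  have hrconX : r M' X' = r M (X' ∪ {e}) - 1 := by rw [hM'def, r_con he hX'E'', hre]
  have hrconY : r M' Y' = r M (Y' ∪ {e}) - 1 := by rw [hM'def, r_con he hY'E'', hre]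
  have hrconE : r M' M'.E = r M M.E - 1 := by
    rw [hgr, hM'def, r_con he Subset.rfl,
      diff_union_of_subset (singleton_subset_iff.mpr he), hre]
  set dX := r M (X' ∪ {e}) - r M X' with hdX
  set dY := r M (Y' ∪ {e}) - r M Y' with hdY
  have hdX0 : 0 ≤ dX := by
    have := r_mono (M := M) (subset_union_left (s := X') (t := {e})); omega
  have hdX1 : dX ≤ 1 := by
    have h1 := r_union_le (M := M) (X := X') (Y := {e})
    have h2 := r_singleton_le M e
    omega
  have hdY0 : 0 ≤ dY := by
    have := r_mono (M := M) (subset_union_left (s := Y') (t := {e})); omega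
  have hdY1 : dY ≤ 1 := by
    have h1 := r_union_le (M := M) (X := Y') (Y := {e})
    have h2 := r_singleton_le M e
    omega
  -- complement identities in M
  have hEdiffX : M.E \ X' = Y' ∪ {e} := by
    rw [hY'def, hgr]
    ext a
    simp only [mem_diff, mem_union, mem_singleton_iff]
    constructor
    · rintro ⟨haE, hanX⟩
      by_cases hae : a = e
      · exact Or.inr hae
      · exact Or.inl ⟨⟨haE, hae⟩, hanX⟩
    · rintro (⟨⟨haE, -⟩, hanX⟩ | rfl)
      · exact ⟨haE, hanX⟩
      · exact ⟨he, henX'⟩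
  have hEdiffXe : M.E \ (X' ∪ {e}) = Y' := by
    rw [hY'def, hgr]
    ext a
    simp only [mem_diff, mem_union, mem_singleton_iff]
    tauto
  have hEdiffY : M.E \ Y' = X' ∪ {e} := by
    have h1 : M'.E \ Y' = X' := by rw [hY'def]; exact diff_diff_cancel_left hX'E
    rw [hY'def, hgr]
    rw [hY'def, hgr] at h1
    ext a
    simp only [mem_diff, mem_union, mem_singleton_iff]
    constructor
    · rintro ⟨haE, hanY⟩
      by_cases hae : a = e
      · exact Or.inr hae
      · refine Or.inl ?_
        rw [← h1]
        exact ⟨⟨haE, hae⟩, fun hc => hanY hc⟩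
      -- a ∈ (M.E \ {e}) \ ((M.E \ {e}) \ X') needs unpacking
    · rintro (hX | rfl)
      · have := hX'E'' hX
        exact ⟨this.1, fun hc => hc.2 hX⟩
      · exact ⟨he, fun hc => hc.1.2 rfl⟩
  -- lam transfer identities
  have hlamMX : lam M X' = lam M' X' + 1 - dX := by
    unfold lam
    rw [hEdiffX, ← hY'def, hrconX, hrconY, hrconE]
    omega
  have hlamMXe : lam M (X' ∪ {e}) = lam M' X' + 1 - dY := by
    unfold lam
    rw [hEdiffXe, ← hY'def, hrconX, hrconY, hrconE]
    omega
  have hlamMY : lam M Y' = lam M' X' + 1 - dY := by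
    unfold lam
    rw [hEdiffY, ← hY'def, hrconX, hrconY, hrconE]
    omega
  -- cardinalities
  have hX'fin : X'.Finite := hE'fin.subset hX'E''
  have hY'fin : Y'.Finite := hE'fin.subset hY'E''
  have hcardAX : (A.ncard : ℤ) ≤ (X'.ncard : ℤ) := by
    exact_mod_cast ncard_le_ncard hAX' hX'fin
  have hcardX1 : (1:ℤ) ≤ (X'.ncard:ℤ) := by
    have := (ncard_pos hX'fin).mpr (hAne.mono hAX'); omega
  have hcardY1 : (1:ℤ) ≤ (Y'.ncard:ℤ) := by
    have := (ncard_pos hY'fin).mpr hY'ne; omega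
  have hcardEX : ((M.E \ X').ncard : ℤ) = (Y'.ncard : ℤ) + 1 := by
    rw [hEdiffX, union_singleton, ncard_insert_of_notMem henY' hY'fin]
    push_cast; ring
  have hcardXe : ((X' ∪ {e}).ncard : ℤ) = (X'.ncard : ℤ) + 1 := by
    rw [union_singleton, ncard_insert_of_notMem henX' hX'fin]
    push_cast; ring
  have hcardEXe : ((M.E \ (X' ∪ {e})).ncard : ℤ) = (Y'.ncard : ℤ) := by rw [hEdiffXe]
  -- three-connectivity probes
  have h3c1 : ∀ W, W ⊆ M.E → (1:ℤ) ≤ (W.ncard:ℤ) → (1:ℤ) ≤ ((M.E \ W).ncard:ℤ) →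
      lam M W ≠ 0 := by
    intro W hW h1 h2 h0
    exact hM 1 one_pos (by norm_num) W hW ⟨by rw [h0]; norm_num, h1, h2⟩
  have h3c2 : ∀ W, W ⊆ M.E → (2:ℤ) ≤ (W.ncard:ℤ) → (2:ℤ) ≤ ((M.E \ W).ncard:ℤ) →
      lam M W ≠ 1 := by
    intro W hW h1 h2 h0
    exact hM 2 two_pos (by norm_num) W hW ⟨by rw [h0]; norm_num, h1, h2⟩
  -- case analysis
  have hlamcases : lam M' X' = 0 ∨ (lam M' X' = 1 ∧ k = 2) := by
    rcases hk12 with h | h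
    · left; rw [h] at hlam'_ub; omega
    · rw [h] at hlam'_ub
      omega
  rcases hlamcases with h0 | ⟨h1, hk2⟩
  · -- lam' = 0 : derive a contradiction
    exfalso
    -- first, lam M X' = 1 - dX, forced to be 1, and |X'| = 1, so k = 1
    have hlamX1 : lam M X' = 1 - dX := by rw [hlamMX, h0]; ring
    have hne0 : lam M X' ≠ 0 := h3c1 X' hX'subE hcardX1 (by omega)
    have hdX' : dX = 0 := by omega
    have hlamX1' : lam M X' = 1 := by omega
    have hX'small : ¬ (2:ℤ) ≤ (X'.ncard:ℤ) := fun h2 =>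
      h3c2 X' hX'subE h2 (by omega) hlamX1'
    have hkA' : (k:ℤ) ≤ (A.ncard:ℤ) := hkA
    have hk1' : k = 1 := by
      rcases hk12 with h | h
      · exact h
      · exfalso; rw [h] at hkA'; omega
    -- now the (X' ∪ {e}) side
    have hlamXe : lam M (X' ∪ {e}) = 1 - dY := by rw [hlamMXe, h0]; ring
    have hXeE : X' ∪ {e} ⊆ M.E := union_subset hX'subE (singleton_subset_iff.mpr he)
    have hne0' : lam M (X' ∪ {e}) ≠ 0 :=
      h3c1 (X' ∪ {e}) hXeE (by omega) (by omega)
    have hdY' : dY = 0 := by omega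
    have hlamXe1 : lam M (X' ∪ {e}) = 1 := by omega
    have hY'small : ¬ (2:ℤ) ≤ (Y'.ncard:ℤ) := fun h2 =>
      h3c2 (X' ∪ {e}) hXeE (by omega) (by omega) hlamXe1
    have hcardY : (Y'.ncard:ℤ) = 1 := by omega
    have hcardX : (X'.ncard:ℤ) = 1 := by omega
    -- ranks: r M' X' = 1, r M' Y' = 1, so r M' M'.E = 2, r M M.E = 3
    have hrX'1 : r M' X' = 1 := by
      have hub := r_le_ncard (M := M') hX'fin
      have hlb : 1 ≤ r M' X' := by
        rw [hrX'A]; exact hrW_ge A hAS hAne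
      omega
    have hrY'1 : r M' Y' = 1 := by
      have hub := r_le_ncard (M := M') hY'fin
      obtain ⟨y, hy⟩ := hY'ne
      have hynl : y ∉ M'.closure ∅ := fun hc =>
        hy.2 (closure_subset_closure M' (empty_subset A) hc)
      have hlb : 1 ≤ r M' Y' := by
        have h := r_mono (M := M') (singleton_subset_iff.mpr hy)
        rw [r_singleton_eq_one (hY'E hy) hynl] at h
        exact h
      omega
    have hrE'2 : r M' M'.E = 2 := by
      rw [hlam'] at h0; omega
    have hrME3 : r M M.E = 3 := by omega
    -- |E'| = 2, so r M (E \ {e}) ≤ 2, giving lam M {e} = 0 : contradiction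
    have hcardE' : ((M.E \ {e}).ncard : ℤ) = 2 := by
      have hdisjXY : Disjoint X' Y' := by rw [hY'def]; exact disjoint_sdiff_right
      have := ncard_union_eq hdisjXY hX'fin hY'fin
      rw [hunion] at this
      rw [hgr] at this
      omega
    have hrEe : r M (M.E \ {e}) ≤ 2 := by
      have := r_le_ncard (M := M) hE'fin
      omega
    have hlame : lam M {e} = 0 := by
      have hl0 : 0 ≤ lam M {e} := lam_nonneg (singleton_subset_iff.mpr he)
      have : lam M {e} = r M {e} + r M (M.E \ {e}) - r M M.E := rfl
      rw [hre, hrME3] at this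
      omega
    exact h3c1 {e} (singleton_subset_iff.mpr he) (by simp) (by omega) hlame
  · -- lam' = 1 and k = 2 : construct the vertical 3-separation
    rw [hk2] at hrAk hrBk hkA hkB
    -- r M' Y' = r M' B ≥ 2
    have hrY'eq : r M' Y' = r M' B := by
      rw [hlam', hrX'A] at h1
      rw [hrS] at heq
      omega
    have hrY'2 : 2 ≤ r M' Y' := by rw [hrY'eq]; exact hrBk
    have hcardX2 : (2:ℤ) ≤ (X'.ncard:ℤ) := by
      have : (2:ℤ) ≤ (A.ncard:ℤ) := hkA
      omega
    have hcardY2 : (2:ℤ) ≤ (Y'.ncard:ℤ) := by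
      have := r_le_ncard (M := M') hY'fin
      omega
    -- lam M X' = 2 - dX ; both sides big, so dX = 0
    have hlamX2 : lam M X' = 2 - dX := by rw [hlamMX, h1]; ring
    have hne0 : lam M X' ≠ 0 := h3c1 X' hX'subE (by omega) (by omega)
    have hne1 : lam M X' ≠ 1 := h3c2 X' hX'subE hcardX2 (by omega)
    have hdX' : dX = 0 := by omega
    -- lam M (X' ∪ {e}) = 2 - dY
    have hlamXe2 : lam M (X' ∪ {e}) = 2 - dY := by rw [hlamMXe, h1]; ring
    have hXeE : X' ∪ {e} ⊆ M.E := union_subset hX'subE (singleton_subset_iff.mpr he)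
    have hne0' : lam M (X' ∪ {e}) ≠ 0 := h3c1 (X' ∪ {e}) hXeE (by omega) (by omega)
    have hne1' : lam M (X' ∪ {e}) ≠ 1 := h3c2 (X' ∪ {e}) hXeE (by omega) (by omega)
    have hdY' : dY = 0 := by omega
    -- e is in both closures
    have hclX : e ∈ M.closure X' := by
      rw [mem_closure_iff_r he hX'subE, ← union_singleton]
      omega
    have hclY : e ∈ M.closure Y' := by
      rw [mem_closure_iff_r he hY'subE, ← union_singleton]
      omega
    refine ⟨X', Y', ?_, ?_, henX', henY', ?_, ?_, hclX, hclY, ?_, ?_⟩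
    · -- partition
      rw [union_right_comm, hunion, hgr, diff_union_of_subset (singleton_subset_iff.mpr he)]
    · rw [hY'def]; exact disjoint_sdiff_right
    · omega
    · rw [hlamMY]; omega
    · -- 3 ≤ r M X'
      have : r M X' = r M' X' + 1 := by omega
      rw [this, hrX'A]; omega
    · have : r M Y' = r M' Y' + 1 := by omega
      rw [this]; omega


end Aux

/-- `si(M/e)` is not 3-connected if and only if `M` has a vertical
3-separation `(X, {e}, Y)`. -/
theorem stmt13 (M : Matroid α) [M.Finite] (hM : ThreeConnected M)
    {e : α} (he : e ∈ M.E) :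
    (∀ N, SimplificationOf (Con M {e}) N → ¬ ThreeConnected N) ↔
      ∃ X Y, VertThreeSep M X e Y := by
  constructor
  · intro h
    obtain ⟨N, hN⟩ := exists_simplification (Con M {e})
    exact not_threeConn_vertsep hM he hN (h N hN)
  · rintro ⟨X, Y, hsep⟩ N hN
    exact vertsep_not_threeConn hM he hsep hN
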